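/- Fix α ∈ (0,1), a > 0, T ∈ ℕ with T ≥ 1, real numbers A ≤ B, outcomes y_1, …, y_T ∈ [A, B], and vectors x_1, …, x_T ∈ ℝ^{p+1} with ‖x_t‖_∞ ≤ max(1, B) for all t. Let L̃_T^θ = Σ_{t=1}^{T} λ_α(y_t, min(max(x_t'θ, A), B)) and J̃_T(θ) = L̃_T^θ/√T + a‖θ‖₁, and let L_T^{θ₀} = Σ_{t=1}^{T} λ_α(y_t, x_t'θ₀). Then for every θ₀ ∈ ℝ^{p+1}: −ln( (a/2)^{p+1} · ∫_{ℝ^{p+1}} exp(−J̃_T(θ)) dθ ) ≤ L_T^{θ₀}/√T + a‖θ₀‖₁ + (p+1)·ln(1 + (√T/a)·max(1, B)). -/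

import Mathlib

open MeasureTheory

/-- The pinball loss at level `α`: `λ_α(y, γ) = α(y − γ)` if `y ≥ γ` and
`(1 − α)(γ − y)` if `y < γ`. -/
noncomputable def pinball (α y γ : ℝ) : ℝ :=
  if γ ≤ y then α * (y - γ) else (1 - α) * (γ - y)

lemma pinball_eq_max {α : ℝ} (hα : α ∈ Set.Ioo (0 : ℝ) 1) (y γ : ℝ) :
    pinball α y γ = max (α * (y - γ)) ((1 - α) * (γ - y)) := by
  obtain ⟨h0, h1⟩ := hα
  unfold pinball
  rcases le_or_gt γ y with h | h
  · rw [if_pos h, max_eq_left]; nlinarith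
  · rw [if_neg (not_le.mpr h), max_eq_right]; nlinarith

lemma pinball_nonneg {α : ℝ} (hα : α ∈ Set.Ioo (0 : ℝ) 1) (y γ : ℝ) :
    0 ≤ pinball α y γ := by
  obtain ⟨h0, h1⟩ := hα
  unfold pinball
  split_ifs with h
  · nlinarith
  · nlinarith [le_of_lt (not_le.mp h)]

lemma pinball_lipschitz {α : ℝ} (hα : α ∈ Set.Ioo (0 : ℝ) 1) (y γ γ' : ℝ) :
    pinball α y γ ≤ pinball α y γ' + |γ - γ'| := by
  obtain ⟨h0, h1⟩ := hα
  unfold pinball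
  have h2 := le_abs_self (γ - γ')
  have h3 := neg_abs_le (γ - γ')
  split_ifs with ha hb hb
  · nlinarith
  · nlinarith [not_le.mp hb]
  · nlinarith [not_le.mp ha]
  · nlinarith [not_le.mp ha, not_le.mp hb]

lemma pinball_clamp_le {α A B : ℝ} (hα : α ∈ Set.Ioo (0 : ℝ) 1) (hAB : A ≤ B)
    {y : ℝ} (hy : y ∈ Set.Icc A B) (γ : ℝ) :
    pinball α y (min (max γ A) B) ≤ pinball α y γ := by
  obtain ⟨h0, h1⟩ := hα
  obtain ⟨hyA, hyB⟩ := hy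
  rcases lt_or_ge γ A with hA | hA
  · have hc : min (max γ A) B = A := by
      rw [max_eq_right hA.le, min_eq_left hAB]
    rw [hc]
    unfold pinball
    rw [if_pos hyA, if_pos (hA.le.trans hyA)]
    nlinarith
  · rcases le_or_gt γ B with hB | hB
    · have hc : min (max γ A) B = γ := by
        rw [max_eq_left hA, min_eq_left hB]
      rw [hc]
    · have hc : min (max γ A) B = B := by
        rw [max_eq_left (hAB.trans hB.le), min_eq_right hB.le]
      rw [hc]
      unfold pinball
      rw [if_neg (not_le.mpr (lt_of_le_of_lt hyB hB))]
      split_ifs with h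
      · nlinarith
      · nlinarith [not_le.mp h]

lemma integrable_exp_neg_mul_abs {b : ℝ} (hb : 0 < b) :
    Integrable (fun x : ℝ => Real.exp (-b * |x|)) := by
  have hIoi : IntegrableOn (fun x : ℝ => Real.exp (-b * |x|)) (Set.Ioi 0) := by
    refine (exp_neg_integrableOn_Ioi 0 hb).congr_fun (fun x hx => ?_) measurableSet_Ioi
    rw [abs_of_pos hx]
  have hIic : IntegrableOn (fun x : ℝ => Real.exp (-b * |x|)) (Set.Iic 0) := by
    rw [IntegrableOn, ← Measure.map_neg_eq_self (volume : Measure ℝ)]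
    have m : MeasurableEmbedding fun x : ℝ => -x := (Homeomorph.neg ℝ).measurableEmbedding
    have hpre : (fun x : ℝ => -x) ⁻¹' Set.Iic 0 = Set.Ici 0 := by ext z; simp
    rw [← IntegrableOn, m.integrableOn_map_iff, hpre]
    simp only [Function.comp_def, abs_neg]
    exact Iff.mpr integrableOn_Ici_iff_integrableOn_Ioi hIoi
  have := hIic.union hIoi
  rwa [Set.Iic_union_Ioi, integrableOn_univ] at this

lemma integral_exp_neg_mul_abs {b : ℝ} (hb : 0 < b) :
    ∫ x : ℝ, Real.exp (-b * |x|) = 2 / b := by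
  rw [integral_comp_abs (f := fun x => Real.exp (-b * x))]
  have h1 : ∫ x in Set.Ioi (0 : ℝ), Real.exp (-b * x)
      = ∫ x in Set.Ioi (0 : ℝ), Real.exp (-b * x ^ (1 : ℝ)) := by
    refine setIntegral_congr_fun measurableSet_Ioi (fun x _ => ?_)
    rw [Real.rpow_one]
  rw [h1, integral_exp_neg_mul_rpow one_pos hb]
  rw [show (-1 / 1 : ℝ) = -1 by norm_num, Real.rpow_neg_one,
    show (1 / 1 + 1 : ℝ) = 2 by norm_num, Real.Gamma_two]
  rw [mul_one, div_eq_mul_inv, mul_comm]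

lemma integrable_exp_neg_mul_l1 {n : ℕ} {b : ℝ} (hb : 0 < b) :
    Integrable (fun θ : Fin n → ℝ => Real.exp (-(b * ∑ i, |θ i|))) := by
  have h : (fun θ : Fin n → ℝ => Real.exp (-(b * ∑ i, |θ i|)))
      = fun θ : Fin n → ℝ => ∏ i, Real.exp (-b * |θ i|) := by
    funext θ
    rw [← Real.exp_sum, Finset.mul_sum]
    congr 1
    rw [← Finset.sum_neg_distrib]
    simp [neg_mul]
  rw [h]
  exact Integrable.fintype_prod (fun _ => integrable_exp_neg_mul_abs hb)

lemma integral_exp_neg_mul_l1 {n : ℕ} {b : ℝ} (hb : 0 < b) :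
    ∫ θ : Fin n → ℝ, Real.exp (-(b * ∑ i, |θ i|)) = (2 / b) ^ n := by
  have h : (fun θ : Fin n → ℝ => Real.exp (-(b * ∑ i, |θ i|)))
      = fun θ : Fin n → ℝ => ∏ i, Real.exp (-b * |θ i|) := by
    funext θ
    rw [← Real.exp_sum, Finset.mul_sum]
    congr 1
    rw [← Finset.sum_neg_distrib]
    simp [neg_mul]
  rw [h, volume_pi, integral_fintype_prod_eq_pow (ι := Fin n) (fun x : ℝ => Real.exp (-b * |x|)),
    integral_exp_neg_mul_abs hb, Fintype.card_fin]

/-- Abstract core estimate: a lower bound on a Laplace-type integral. -/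
lemma aux_neg_log_le {n : ℕ} (a c L₀ : ℝ) (ha : 0 < a) (hc : 0 < c)
    (F : (Fin n → ℝ) → ℝ) (hFc : Continuous F) (hF0 : ∀ θ, 0 ≤ F θ)
    (θ₀ : Fin n → ℝ)
    (hkey : ∀ θ, F θ ≤ L₀ + c * ∑ i, |θ i - θ₀ i|) :
    -Real.log ((a / 2) ^ n * ∫ θ : Fin n → ℝ, Real.exp (-(F θ + a * ∑ i, |θ i|)))
      ≤ L₀ + a * ∑ i, |θ₀ i| + (n : ℝ) * Real.log ((c + a) / a) := by
  have hb0 : 0 < c + a := by linarith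
  set K : ℝ := L₀ + a * ∑ i, |θ₀ i| with hK
  -- pointwise bound
  have hgf : ∀ θ : Fin n → ℝ,
      Real.exp (-K) * Real.exp (-((c + a) * ∑ i, |θ i - θ₀ i|))
        ≤ Real.exp (-(F θ + a * ∑ i, |θ i|)) := by
    intro θ
    rw [← Real.exp_add, Real.exp_le_exp, ← neg_add, neg_le_neg_iff]
    have h1 := hkey θ
    have h2 : a * ∑ i, |θ i| ≤ a * ∑ i, |θ₀ i| + a * ∑ i, |θ i - θ₀ i| := by
      rw [← mul_add]
      refine mul_le_mul_of_nonneg_left ?_ ha.le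
      rw [← Finset.sum_add_distrib]
      refine Finset.sum_le_sum fun i _ => ?_
      have := abs_sub_abs_le_abs_sub (θ i) (θ₀ i); linarith
    rw [hK]; nlinarith [Finset.sum_nonneg (fun i (_ : i ∈ Finset.univ) => abs_nonneg (θ i - θ₀ i))]
  -- integrability of the integrand
  have hfc : Continuous fun θ : Fin n → ℝ => Real.exp (-(F θ + a * ∑ i, |θ i|)) := by
    refine Real.continuous_exp.comp (Continuous.neg (hFc.add ?_))
    exact continuous_const.mul (continuous_finset_sum _ fun i _ => (continuous_apply i).abs)
  have hf_int : Integrable fun θ : Fin n → ℝ => Real.exp (-(F θ + a * ∑ i, |θ i|)) := by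
    refine (integrable_exp_neg_mul_l1 (n := n) ha).mono hfc.aestronglyMeasurable
      (Filter.Eventually.of_forall fun θ => ?_)
    rw [Real.norm_eq_abs, Real.norm_eq_abs, Real.abs_exp, Real.abs_exp, Real.exp_le_exp,
      neg_le_neg_iff]
    have := hF0 θ; linarith
  -- integrability and value of the lower bound
  have hg1 : Integrable fun θ : Fin n → ℝ =>
      Real.exp (-((c + a) * ∑ i, |θ i - θ₀ i|)) := by
    have := (integrable_exp_neg_mul_l1 (n := n) hb0).comp_sub_right θ₀
    simpa using this
  have hg_int : Integrable fun θ : Fin n → ℝ =>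
      Real.exp (-K) * Real.exp (-((c + a) * ∑ i, |θ i - θ₀ i|)) := hg1.const_mul _
  have hg_val : (∫ θ : Fin n → ℝ,
      Real.exp (-K) * Real.exp (-((c + a) * ∑ i, |θ i - θ₀ i|)))
      = Real.exp (-K) * (2 / (c + a)) ^ n := by
    rw [integral_const_mul]
    congr 1
    have := integral_sub_right_eq_self
      (fun θ : Fin n → ℝ => Real.exp (-((c + a) * ∑ i, |θ i|))) θ₀ (μ := volume)
    simp only [Pi.sub_apply] at this
    rw [this, integral_exp_neg_mul_l1 hb0]
  have hI : Real.exp (-K) * (2 / (c + a)) ^ n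
      ≤ ∫ θ : Fin n → ℝ, Real.exp (-(F θ + a * ∑ i, |θ i|)) := by
    rw [← hg_val]
    exact integral_mono hg_int hf_int hgf
  have hle : Real.exp (-K) * (a / (c + a)) ^ n
      ≤ (a / 2) ^ n * ∫ θ : Fin n → ℝ, Real.exp (-(F θ + a * ∑ i, |θ i|)) := by
    have h := mul_le_mul_of_nonneg_left hI (by positivity : (0:ℝ) ≤ (a / 2) ^ n)
    calc Real.exp (-K) * (a / (c + a)) ^ n
        = (a / 2) ^ n * (Real.exp (-K) * (2 / (c + a)) ^ n) := by
          rw [← mul_assoc, mul_comm ((a/2)^n), mul_assoc, ← mul_pow]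
          congr 2
          field_simp
      _ ≤ _ := h
  have hpos : 0 < Real.exp (-K) * (a / (c + a)) ^ n := by positivity
  have hlog := Real.log_le_log hpos hle
  have hlhs : Real.log (Real.exp (-K) * (a / (c + a)) ^ n)
      = -K + (n : ℝ) * (Real.log a - Real.log (c + a)) := by
    rw [Real.log_mul (Real.exp_ne_zero _) (by positivity), Real.log_exp, Real.log_pow,
      Real.log_div ha.ne' hb0.ne']
  rw [hlhs] at hlog
  have hba : Real.log ((c + a) / a) = Real.log (c + a) - Real.log a :=
    Real.log_div hb0.ne' ha.ne'
  rw [hK] at hlog ⊢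
  rw [hba]
  linarith

theorem neg_log_integral_le {p : ℕ} (α a A B : ℝ)
    (hα : α ∈ Set.Ioo (0 : ℝ) 1) (ha : 0 < a) (hAB : A ≤ B)
    (T : ℕ) (hT : 1 ≤ T)
    (y : ℕ → ℝ) (hy : ∀ t ∈ Finset.Icc 1 T, y t ∈ Set.Icc A B)
    (x : ℕ → Fin (p + 1) → ℝ)
    (hx : ∀ t ∈ Finset.Icc 1 T, ∀ i, |x t i| ≤ max 1 B)
    (θ₀ : Fin (p + 1) → ℝ) :
    -Real.log ((a / 2) ^ (p + 1) *
        ∫ θ : Fin (p + 1) → ℝ,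
          Real.exp (-((∑ t ∈ Finset.Icc 1 T,
              pinball α (y t) (min (max (∑ i, x t i * θ i) A) B)) / Real.sqrt T
            + a * ∑ i, |θ i|)))
      ≤ (∑ t ∈ Finset.Icc 1 T, pinball α (y t) (∑ i, x t i * θ₀ i)) / Real.sqrt T
        + a * ∑ i, |θ₀ i|
        + (p + 1 : ℝ) * Real.log (1 + Real.sqrt T / a * max 1 B) := by
  have hM1 : (1 : ℝ) ≤ max 1 B := le_max_left _ _
  have hM0 : (0 : ℝ) < max 1 B := lt_of_lt_of_le one_pos hM1
  have hsT1 : (1 : ℝ) ≤ Real.sqrt T := by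
    rw [show (1 : ℝ) = Real.sqrt 1 by rw [Real.sqrt_one]]
    exact Real.sqrt_le_sqrt (by exact_mod_cast hT)
  have hsT0 : (0 : ℝ) < Real.sqrt T := lt_of_lt_of_le one_pos hsT1
  have hc : (0 : ℝ) < Real.sqrt T * max 1 B := by positivity
  -- the key Lipschitz-type bound
  have hkey : ∀ θ : Fin (p + 1) → ℝ,
      (∑ t ∈ Finset.Icc 1 T,
        pinball α (y t) (min (max (∑ i, x t i * θ i) A) B)) / Real.sqrt T
      ≤ (∑ t ∈ Finset.Icc 1 T, pinball α (y t) (∑ i, x t i * θ₀ i)) / Real.sqrt T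
        + Real.sqrt T * max 1 B * ∑ i, |θ i - θ₀ i| := by
    intro θ
    have hd0 : 0 ≤ ∑ i, |θ i - θ₀ i| :=
      Finset.sum_nonneg fun i _ => abs_nonneg _
    have hsum : (∑ t ∈ Finset.Icc 1 T,
        pinball α (y t) (min (max (∑ i, x t i * θ i) A) B))
        ≤ (∑ t ∈ Finset.Icc 1 T, pinball α (y t) (∑ i, x t i * θ₀ i))
          + T * (max 1 B * ∑ i, |θ i - θ₀ i|) := by
      have hterm : ∀ t ∈ Finset.Icc 1 T,
          pinball α (y t) (min (max (∑ i, x t i * θ i) A) B)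
            ≤ pinball α (y t) (∑ i, x t i * θ₀ i)
              + max 1 B * ∑ i, |θ i - θ₀ i| := by
        intro t ht
        have h1 := pinball_clamp_le hα hAB (hy t ht) (∑ i, x t i * θ i)
        have h2 := pinball_lipschitz hα (y t) (∑ i, x t i * θ i) (∑ i, x t i * θ₀ i)
        have h3 : |(∑ i, x t i * θ i) - ∑ i, x t i * θ₀ i|
            ≤ max 1 B * ∑ i, |θ i - θ₀ i| := by
          rw [← Finset.sum_sub_distrib]
          calc |∑ i, (x t i * θ i - x t i * θ₀ i)|
              ≤ ∑ i, |x t i * θ i - x t i * θ₀ i| := Finset.abs_sum_le_sum_abs _ _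
            _ = ∑ i, |x t i| * |θ i - θ₀ i| := by
                simp_rw [← mul_sub, abs_mul]
            _ ≤ ∑ i, max 1 B * |θ i - θ₀ i| := by
                refine Finset.sum_le_sum fun i _ => ?_
                exact mul_le_mul_of_nonneg_right (hx t ht i) (abs_nonneg _)
            _ = max 1 B * ∑ i, |θ i - θ₀ i| := by rw [Finset.mul_sum]
        linarith
      calc (∑ t ∈ Finset.Icc 1 T, pinball α (y t) (min (max (∑ i, x t i * θ i) A) B))
          ≤ ∑ t ∈ Finset.Icc 1 T, (pinball α (y t) (∑ i, x t i * θ₀ i)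
              + max 1 B * ∑ i, |θ i - θ₀ i|) := Finset.sum_le_sum hterm
        _ = (∑ t ∈ Finset.Icc 1 T, pinball α (y t) (∑ i, x t i * θ₀ i))
            + T * (max 1 B * ∑ i, |θ i - θ₀ i|) := by
            rw [Finset.sum_add_distrib, Finset.sum_const, Nat.card_Icc]
            simp [nsmul_eq_mul]
    have hTd : (T : ℝ) = Real.sqrt T * Real.sqrt T :=
      (Real.mul_self_sqrt (Nat.cast_nonneg T)).symm
    rw [div_le_iff₀ hsT0, add_mul, div_mul_cancel₀ _ hsT0.ne'] at *
    calc (∑ t ∈ Finset.Icc 1 T, pinball α (y t) (min (max (∑ i, x t i * θ i) A) B))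
        ≤ (∑ t ∈ Finset.Icc 1 T, pinball α (y t) (∑ i, x t i * θ₀ i))
          + T * (max 1 B * ∑ i, |θ i - θ₀ i|) := hsum
      _ = (∑ t ∈ Finset.Icc 1 T, pinball α (y t) (∑ i, x t i * θ₀ i))
          + Real.sqrt T * max 1 B * (∑ i, |θ i - θ₀ i|) * Real.sqrt T := by
          linear_combination (max 1 B * ∑ i, |θ i - θ₀ i|) * hTd
  -- continuity of the loss term
  have hFc : Continuous fun θ : Fin (p + 1) → ℝ =>
      (∑ t ∈ Finset.Icc 1 T,
        pinball α (y t) (min (max (∑ i, x t i * θ i) A) B)) / Real.sqrt T := by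
    refine Continuous.div_const ?_ _
    refine continuous_finset_sum _ fun t _ => ?_
    have hlin : Continuous fun θ : Fin (p + 1) → ℝ => ∑ i, x t i * θ i :=
      continuous_finset_sum _ fun i _ => continuous_const.mul (continuous_apply i)
    have hclamp : Continuous fun θ : Fin (p + 1) → ℝ =>
        min (max (∑ i, x t i * θ i) A) B := (hlin.max continuous_const).min continuous_const
    have : (fun θ : Fin (p + 1) → ℝ =>
        pinball α (y t) (min (max (∑ i, x t i * θ i) A) B))
        = fun θ => max (α * (y t - min (max (∑ i, x t i * θ i) A) B))
            ((1 - α) * (min (max (∑ i, x t i * θ i) A) B - y t)) := by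
      funext θ; exact pinball_eq_max hα _ _
    rw [this]
    exact (continuous_const.mul (continuous_const.sub hclamp)).max
      (continuous_const.mul (hclamp.sub continuous_const))
  have hF0 : ∀ θ : Fin (p + 1) → ℝ, 0 ≤ (∑ t ∈ Finset.Icc 1 T,
      pinball α (y t) (min (max (∑ i, x t i * θ i) A) B)) / Real.sqrt T := by
    intro θ
    exact div_nonneg (Finset.sum_nonneg fun t _ => pinball_nonneg hα _ _) hsT0.le
  have hmain := aux_neg_log_le (n := p + 1) a (Real.sqrt T * max 1 B)
    ((∑ t ∈ Finset.Icc 1 T, pinball α (y t) (∑ i, x t i * θ₀ i)) / Real.sqrt T)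
    ha hc _ hFc hF0 θ₀ hkey
  have hba : (Real.sqrt T * max 1 B + a) / a = 1 + Real.sqrt T / a * max 1 B := by
    field_simp
    ring
  rw [hba] at hmain
  have hcast : ((p + 1 : ℕ) : ℝ) = (p : ℝ) + 1 := by push_cast; ring
  rw [hcast] at hmain
  exact hmain
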